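/- (Order-sorted counterexample) Consider sorts {0,1,2,3} with 1 ≽ 0, sort attachment x:0, y:2, f:0→2, g:2→2, h:1×0→2, e:0→1, i:2×2→3, c:1, a:3, b:3, and the TRS R = {f(x) → h(e(x),x), h(c,x) → g(f(x)), e(x) → x, i(y,y) → a, i(y,g(y)) → b}. Then R is confluent on order-sorted terms but not confluent on all terms: a ←* i(f(c),f(c)) →* b with a and b distinct normal forms. -/

import Mathlib

/-- First-order terms over signature `F` and variables `V`. -/
inductive Tm (F V : Type) : Type
  | var : V → Tm F V
  | app : F → List (Tm F V) → Tm F V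

namespace Tm

variable {F V G : Type}

/-- Applying a substitution to a term. -/
def subst (σ : V → Tm F V) : Tm F V → Tm F V
  | var x => σ x
  | app f ts => app f (ts.attach.map (fun ⟨t, _⟩ => subst σ t))
  decreasing_by · simp only [Tm.app.sizeOf_spec]; have := List.sizeOf_lt_of_mem ‹_›; omega

/-- List of (occurrences of) variables of a term. -/
def vars : Tm F V → List V
  | var x => [x]
  | app _ ts => ts.attach.flatMap (fun ⟨t, _⟩ => vars t)
  decreasing_by · simp only [Tm.app.sizeOf_spec]; have := List.sizeOf_lt_of_mem ‹_›; omega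

/-- Renaming the function symbols of a term. -/
def mapF (g : F → G) : Tm F V → Tm G V
  | var x => var x
  | app f ts => app (g f) (ts.attach.map (fun ⟨t, _⟩ => mapF g t))
  decreasing_by · simp only [Tm.app.sizeOf_spec]; have := List.sizeOf_lt_of_mem ‹_›; omega

/-- The subterm at a position (a list of argument indices), if the position exists. -/
def sub : List Nat → Tm F V → Option (Tm F V)
  | [], t => some t
  | _ :: _, var _ => none
  | i :: p, app _ ts => ts[i]?.bind (sub p)

/-- Replacing the subterm at a position by another term. -/
def repl : List Nat → Tm F V → Tm F V → Tm F V
  | [], _, u => u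
  | _ :: _, var x, _ => var x
  | i :: p, app f ts, u =>
      app f (match ts[i]? with
             | some t => ts.set i (repl p t u)
             | none => ts)

end Tm

/-- A rewrite rule: a pair of terms. -/
structure Rule (F V : Type) where
  lhs : Tm F V
  rhs : Tm F V

/-- The usual variable conditions on a rewrite rule: the left-hand side is
not a variable and all variables of the right-hand side occur in the left-hand side. -/
def WfRule {F V : Type} (ρ : Rule F V) : Prop :=
  (∀ x, ρ.lhs ≠ .var x) ∧ ∀ x, x ∈ ρ.rhs.vars → x ∈ ρ.lhs.vars

/-- `s` rewrites to `t` at position `p` using rule `ρ`. -/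
def StepAt {F V : Type} (p : List Nat) (ρ : Rule F V) (s t : Tm F V) : Prop :=
  ∃ σ : V → Tm F V, Tm.sub p s = some (Tm.subst σ ρ.lhs) ∧ t = Tm.repl p s (Tm.subst σ ρ.rhs)

/-- The rewrite relation of a TRS (set of rules). -/
def Step {F V : Type} (R : Set (Rule F V)) (s t : Tm F V) : Prop :=
  ∃ ρ ∈ R, ∃ p, StepAt p ρ s t

/-- `l` matches `t`: some substitution instance of `l` equals `t`. -/
def Matches {F V : Type} (l t : Tm F V) : Prop :=
  ∃ σ : V → Tm F V, Tm.subst σ l = t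

/-- Reflexive-transitive closure of rewriting. -/
abbrev Steps {F V : Type} (R : Set (Rule F V)) : Tm F V → Tm F V → Prop :=
  Relation.ReflTransGen (Step R)

/-- Confluence on a set of terms. -/
def ConfluentOn {F V : Type} (R : Set (Rule F V)) (T : Set (Tm F V)) : Prop :=
  ∀ s ∈ T, ∀ t u, Steps R s t → Steps R s u → ∃ v, Steps R t v ∧ Steps R u v

/-- Confluence (on all terms). -/
def Confluent {F V : Type} (R : Set (Rule F V)) : Prop :=
  ConfluentOn R Set.univ

/-- A relation is terminating if it admits no infinite sequences, i.e., its
inverse is well-founded. -/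
def TerminatingRel {α : Type} (r : α → α → Prop) : Prop :=
  WellFounded (fun a b => r b a)

/-- One step of `A` relative to `B`: `→B* · →A · →B*`. -/
def RelStep {F V : Type} (A B : Set (Rule F V)) (s t : Tm F V) : Prop :=
  ∃ s' t', Steps B s s' ∧ Step A s' t' ∧ Steps B t' t

/-- Relative termination of `A/B`. -/
def RelTerminating {F V : Type} (A B : Set (Rule F V)) : Prop :=
  TerminatingRel (RelStep A B)

/-- The signature of the order-sorted counterexample. -/
inductive S19 : Type
  | f | g | h | e | i | c | a | b

/-- The sort attachment on function symbols: argument sorts and result sort. -/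
def sig19 : S19 → List (Fin 4) × Fin 4
  | S19.f => ([0], 2)
  | S19.g => ([2], 2)
  | S19.h => ([1, 0], 2)
  | S19.e => ([0], 1)
  | S19.i => ([2, 2], 3)
  | S19.c => ([], 1)
  | S19.a => ([], 3)
  | S19.b => ([], 3)

/-- Sorts of variables: infinitely many variables of each of the four sorts. -/
def vsort19 (n : Nat) : Fin 4 := ⟨n % 4, by omega⟩

/-- The sort precedence `≽`: reflexive, and `1 ≽ 0`. -/
def geq19 (α β : Fin 4) : Prop := α = β ∨ (α = 1 ∧ β = 0)

/-- Order-sorted terms of a given sort. -/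
inductive OSort : Tm S19 Nat → Fin 4 → Prop
  | var (x : Nat) : OSort (Tm.var x) (vsort19 x)
  | app (f : S19) (ts : List (Tm S19 Nat)) (βs : List (Fin 4)) :
      List.Forall₂ OSort ts βs → List.Forall₂ geq19 (sig19 f).1 βs →
      OSort (Tm.app f ts) (sig19 f).2

/-- The variable `x` of sort 0. -/
def vx : Tm S19 Nat := Tm.var 0
/-- The variable `y` of sort 2. -/
def vy : Tm S19 Nat := Tm.var 2

/-- The TRS of the counterexample:
`f(x) → h(e(x),x)`, `h(c,x) → g(f(x))`, `e(x) → x`, `i(y,y) → a`, `i(y,g(y)) → b`. -/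
def R19 : Set (Rule S19 Nat) :=
  { ⟨Tm.app S19.f [vx], Tm.app S19.h [Tm.app S19.e [vx], vx]⟩,
    ⟨Tm.app S19.h [Tm.app S19.c [], vx], Tm.app S19.g [Tm.app S19.f [vx]]⟩,
    ⟨Tm.app S19.e [vx], vx⟩,
    ⟨Tm.app S19.i [vy, vy], Tm.app S19.a []⟩,
    ⟨Tm.app S19.i [vy, Tm.app S19.g [vy]], Tm.app S19.b []⟩ }

/-- The term `i(f(c), f(c))`. -/
def peakTm : Tm S19 Nat :=
  Tm.app S19.i [Tm.app S19.f [Tm.app S19.c []], Tm.app S19.f [Tm.app S19.c []]]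

section Work
open Tm S19

theorem subst_app (σ : Nat → Tm S19 Nat) (f : S19) (ts : List (Tm S19 Nat)) :
    Tm.subst σ (Tm.app f ts) = Tm.app f (ts.map (Tm.subst σ)) := by
  rw [Tm.subst]; simp

/-- Inductive characterization of one rewrite step of `R19`. -/
inductive St : Tm S19 Nat → Tm S19 Nat → Prop
  | r1 (u) : St (.app .f [u]) (.app .h [.app .e [u], u])
  | r2 (u) : St (.app .h [.app .c [], u]) (.app .g [.app .f [u]])
  | r3 (u) : St (.app .e [u]) u
  | r4 (u) : St (.app .i [u, u]) (.app .a [])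
  | r5 (u) : St (.app .i [u, .app .g [u]]) (.app .b [])
  | congr (f ts i u u') : St u u' → ts[i]? = some u →
      St (.app f ts) (.app f (ts.set i u'))

theorem stepAt_cons {i : Nat} {p : List Nat} {ρ : Rule S19 Nat} {s t : Tm S19 Nat}
    (h : StepAt (i :: p) ρ s t) :
    ∃ f ts u u', s = Tm.app f ts ∧ ts[i]? = some u ∧ StepAt p ρ u u' ∧
      t = Tm.app f (ts.set i u') := by
  obtain ⟨σ, h1, h2⟩ := h
  cases s with
  | var x => simp [Tm.sub] at h1
  | app f ts =>
    simp only [Tm.sub] at h1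
    cases hg : ts[i]? with
    | none => rw [hg] at h1; simp at h1
    | some u =>
      rw [hg] at h1; simp at h1
      refine ⟨f, ts, u, Tm.repl p u (Tm.subst σ ρ.rhs), rfl, hg, ⟨σ, h1, rfl⟩, ?_⟩
      rw [h2]; simp only [Tm.repl]; rw [hg]

theorem step_to_st {s t : Tm S19 Nat} (h : Step R19 s t) : St s t := by
  obtain ⟨ρ, hρ, p, hp⟩ := h
  induction p generalizing s t with
  | cons i p ih =>
    obtain ⟨f, ts, u, u', rfl, hg, hst, rfl⟩ := stepAt_cons hp
    exact St.congr f ts i u u' (ih hst) hg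
  | nil =>
    obtain ⟨σ, h1, h2⟩ := hp
    simp only [Tm.sub, Option.some.injEq] at h1
    simp only [Tm.repl] at h2
    subst h1 h2
    rcases hρ with h | h | h | h | h <;> rw [h] <;>
      simp only [subst_app, List.map, vx, vy, Tm.subst]
    · exact St.r1 _
    · exact St.r2 _
    · exact St.r3 _
    · exact St.r4 _
    · exact St.r5 _


theorem st_to_step {s t : Tm S19 Nat} (h : St s t) : Step R19 s t := by
  induction h with
  | r1 u =>
    refine ⟨_, Or.inl rfl, [], fun _ => u, ?_, ?_⟩ <;>
      simp [Tm.sub, Tm.repl, subst_app, vx, Tm.subst]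
  | r2 u =>
    refine ⟨_, Or.inr (Or.inl rfl), [], fun _ => u, ?_, ?_⟩ <;>
      simp [Tm.sub, Tm.repl, subst_app, vx, Tm.subst]
  | r3 u =>
    refine ⟨_, Or.inr (Or.inr (Or.inl rfl)), [], fun _ => u, ?_, ?_⟩ <;>
      simp [Tm.sub, Tm.repl, subst_app, vx, Tm.subst]
  | r4 u =>
    refine ⟨_, Or.inr (Or.inr (Or.inr (Or.inl rfl))), [], fun _ => u, ?_, ?_⟩ <;>
      simp [Tm.sub, Tm.repl, subst_app, vy, Tm.subst]
  | r5 u =>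
    refine ⟨_, Or.inr (Or.inr (Or.inr (Or.inr rfl))), [], fun _ => u, ?_, ?_⟩ <;>
      simp [Tm.sub, Tm.repl, subst_app, vy, Tm.subst]
  | congr g ts i u u' _ hg ih =>
    obtain ⟨ρ, hρ, p, σ, h1, h2⟩ := ih
    exact ⟨ρ, hρ, i :: p, σ, by simp [Tm.sub, hg, h1], by simp [Tm.repl, hg, ← h2]⟩

theorem step_iff {s t : Tm S19 Nat} : Step R19 s t ↔ St s t :=
  ⟨step_to_st, st_to_step⟩
def sortOf : Tm S19 Nat → Fin 4
  | .var x => vsort19 x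
  | .app fn _ => (sig19 fn).2

@[simp] theorem sortOf_app (fn : S19) (ts : List (Tm S19 Nat)) :
    sortOf (.app fn ts) = (sig19 fn).2 := rfl

@[simp] theorem sortOf_var (x : Nat) : sortOf (.var x) = vsort19 x := rfl

def W : Tm S19 Nat → Prop
  | .var _ => True
  | .app .f [t] => W t ∧ sortOf t = 0
  | .app .g [t] => W t ∧ sortOf t = 2
  | .app .h [s, t] => W s ∧ W t ∧ (sortOf s = 1 ∨ sortOf s = 0) ∧ sortOf t = 0
  | .app .e [t] => W t ∧ sortOf t = 0
  | .app .i [s, t] => W s ∧ W t ∧ sortOf s = 2 ∧ sortOf t = 2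
  | .app .c [] => True
  | .app .a [] => True
  | .app .b [] => True
  | .app _ _ => False

theorem sort0_var {u : Tm S19 Nat} (h2 : sortOf u = 0) : ∃ x, u = .var x := by
  cases u with
  | var x => exact ⟨x, rfl⟩
  | app fn ts => cases fn <;> simp only [sortOf_app, sig19] at h2 <;> exact absurd h2 (by decide)

theorem osort_W : ∀ n t, sizeOf t ≤ n → ∀ α, OSort t α → W t ∧ sortOf t = α := by
  intro n
  induction n with
  | zero =>
    intro t ht
    cases t <;> simp_all <;> omega
  | succ n ih =>
    intro t ht α h
    cases h with
    | var x => exact ⟨trivial, rfl⟩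
    | app fn ts βs h1 h2 =>
      have hsz : ∀ u ∈ ts, sizeOf u ≤ n := by
        intro u hu
        have := List.sizeOf_lt_of_mem hu
        simp only [Tm.app.sizeOf_spec] at ht
        omega
      cases fn
      case f =>
        simp only [sig19] at h2
        cases h2 with | @cons _ β _ βs' hg h2 =>
        cases h2
        cases h1 with | @cons t _ ts' _ ho h1 =>
        cases h1
        have hβ : β = 0 := by rcases hg with h | ⟨h, h'⟩ <;> simp_all [geq19]
        subst hβ
        obtain ⟨hw, hs⟩ := ih t (hsz t (by simp)) _ ho
        exact ⟨⟨hw, hs⟩, rfl⟩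
      case e =>
        simp only [sig19] at h2
        cases h2 with | @cons _ β _ βs' hg h2 =>
        cases h2
        cases h1 with | @cons t _ ts' _ ho h1 =>
        cases h1
        have hβ : β = 0 := by rcases hg with h | ⟨h, h'⟩ <;> simp_all [geq19]
        subst hβ
        obtain ⟨hw, hs⟩ := ih t (hsz t (by simp)) _ ho
        exact ⟨⟨hw, hs⟩, rfl⟩
      case g =>
        simp only [sig19] at h2
        cases h2 with | @cons _ β _ βs' hg h2 =>
        cases h2
        cases h1 with | @cons t _ ts' _ ho h1 =>
        cases h1
        have hβ : β = 2 := by rcases hg with h | ⟨h, h'⟩ <;> simp_all [geq19]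
        subst hβ
        obtain ⟨hw, hs⟩ := ih t (hsz t (by simp)) _ ho
        exact ⟨⟨hw, hs⟩, rfl⟩
      case h =>
        simp only [sig19] at h2
        cases h2 with | @cons _ β1 _ _ hg1 h2 =>
        cases h2 with | @cons _ β2 _ βs' hg2 h2 =>
        cases h2
        cases h1 with | @cons t1 _ _ _ ho1 h1 =>
        cases h1 with | @cons t2 _ ts' _ ho2 h1 =>
        cases h1
        have hβ1 : β1 = 1 ∨ β1 = 0 := by
          rcases hg1 with h | ⟨h, h'⟩ <;> simp_all [geq19]
        have hβ2 : β2 = 0 := by rcases hg2 with h | ⟨h, h'⟩ <;> simp_all [geq19]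
        subst hβ2
        obtain ⟨hw1, hs1⟩ := ih t1 (hsz t1 (by simp)) _ ho1
        obtain ⟨hw2, hs2⟩ := ih t2 (hsz t2 (by simp)) _ ho2
        refine ⟨⟨hw1, hw2, ?_, hs2⟩, rfl⟩
        rw [hs1]; exact hβ1
      case i =>
        simp only [sig19] at h2
        cases h2 with | @cons _ β1 _ _ hg1 h2 =>
        cases h2 with | @cons _ β2 _ βs' hg2 h2 =>
        cases h2
        cases h1 with | @cons t1 _ _ _ ho1 h1 =>
        cases h1 with | @cons t2 _ ts' _ ho2 h1 =>
        cases h1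
        have hβ1 : β1 = 2 := by rcases hg1 with h | ⟨h, h'⟩ <;> simp_all [geq19]
        have hβ2 : β2 = 2 := by rcases hg2 with h | ⟨h, h'⟩ <;> simp_all [geq19]
        subst hβ1; subst hβ2
        obtain ⟨hw1, hs1⟩ := ih t1 (hsz t1 (by simp)) _ ho1
        obtain ⟨hw2, hs2⟩ := ih t2 (hsz t2 (by simp)) _ ho2
        exact ⟨⟨hw1, hw2, hs1, hs2⟩, rfl⟩
      case c => cases h2; cases h1; exact ⟨trivial, rfl⟩
      case a => cases h2; cases h1; exact ⟨trivial, rfl⟩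
      case b => cases h2; cases h1; exact ⟨trivial, rfl⟩


theorem st_not_var {x : Nat} {t : Tm S19 Nat} (h : St (.var x) t) : False := by cases h

theorem st_W {s t : Tm S19 Nat} (h : St s t) (hw : W s) :
    W t ∧ (sortOf t = sortOf s ∨ (sortOf s = 1 ∧ sortOf t = 0)) := by
  induction h with
  | r1 u =>
    obtain ⟨x, rfl⟩ := sort0_var (by simp only [W] at hw; exact hw.2)
    simp_all [W, sig19]
  | r2 u =>
    obtain ⟨x, rfl⟩ := sort0_var (by simp only [W] at hw; exact hw.2.2.2)
    simp_all [W, sig19]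
  | r3 u => simp_all [W, sig19]
  | r4 u => simp_all [W, sig19]
  | r5 u => simp_all [W, sig19]
  | congr fn ts i u u' hst hg ih =>
    rcases ts with _ | ⟨t1, _ | ⟨t2, _ | ⟨t3, ts⟩⟩⟩
    · simp at hg
    · rcases i with _ | i
      · simp only [List.getElem?_cons_succ, List.getElem?_cons_zero] at hg
        injection hg with hg; subst hg
        cases fn <;> simp only [W] at hw ⊢ <;> try exact hw.elim
        · -- f : arg has sort 0, hence a variable, no step
          obtain ⟨x, rfl⟩ := sort0_var hw.2
          exact absurd hst st_not_var
        · -- g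
          obtain ⟨hw', hs⟩ := ih hw.1
          refine ⟨⟨hw', ?_⟩, Or.inl rfl⟩
          rcases hs with hs | ⟨hs, _⟩ <;> simp_all
        · -- e
          obtain ⟨x, rfl⟩ := sort0_var hw.2
          exact absurd hst st_not_var
      · simp at hg
    · rcases i with _ | ⟨_ | i⟩
      · simp only [List.getElem?_cons_succ, List.getElem?_cons_zero] at hg
        injection hg with hg; subst hg
        cases fn <;> simp only [W, List.set] at hw ⊢ <;> try exact hw.elim
        · -- h
          obtain ⟨hw1, hw2, hs1, hs2⟩ := hw
          rcases hs1 with hs1 | hs1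
          · obtain ⟨hw', hs⟩ := ih hw1
            refine ⟨⟨hw', hw2, ?_, hs2⟩, Or.inl rfl⟩
            rcases hs with hs | ⟨_, hs⟩ <;> simp_all
          · obtain ⟨x, rfl⟩ := sort0_var hs1
            exact absurd hst st_not_var
        · -- i
          obtain ⟨hw1, hw2, hs1, hs2⟩ := hw
          obtain ⟨hw', hs⟩ := ih hw1
          refine ⟨⟨hw', hw2, ?_, hs2⟩, Or.inl rfl⟩
          rcases hs with hs | ⟨hs, _⟩ <;> simp_all
      · simp only [List.getElem?_cons_succ, List.getElem?_cons_zero] at hg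
        injection hg with hg; subst hg
        cases fn <;> simp only [W, List.set] at hw ⊢ <;> try exact hw.elim
        · -- h : second arg sort 0
          obtain ⟨x, rfl⟩ := sort0_var hw.2.2.2
          exact absurd hst st_not_var
        · -- i
          obtain ⟨hw1, hw2, hs1, hs2⟩ := hw
          obtain ⟨hw', hs⟩ := ih hw2
          refine ⟨⟨hw1, hw', hs1, ?_⟩, Or.inl rfl⟩
          rcases hs with hs | ⟨hs, _⟩ <;> simp_all
      · simp at hg
    · cases fn <;> simp only [W] at hw <;> exact hw.elim

end Work
section Work2
open Tm S19

attribute [local instance] Classical.propDecidable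

noncomputable def nf : Tm S19 Nat → Tm S19 Nat
  | .var x => .var x
  | .app .e [t] => nf t
  | .app .f [t] => .app .h [nf t, nf t]
  | .app .h [s, t] =>
      if nf s = .app .c [] then .app .g [.app .h [nf t, nf t]]
      else .app .h [nf s, nf t]
  | .app .g [t] => .app .g [nf t]
  | .app .i [s, t] =>
      if nf s = nf t then .app .a []
      else if nf t = .app .g [nf s] then .app .b []
      else .app .i [nf s, nf t]
  | .app fn ts => .app fn ts

abbrev Sts : Tm S19 Nat → Tm S19 Nat → Prop := Relation.ReflTransGen St

theorem st_congr1 (fn : S19) {t t' : Tm S19 Nat} (h : St t t') :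
    St (.app fn [t]) (.app fn [t']) := by
  simpa using St.congr fn [t] 0 t t' h rfl

theorem st_congr2l (fn : S19) (s : Tm S19 Nat) {t t' : Tm S19 Nat} (h : St t t') :
    St (.app fn [t, s]) (.app fn [t', s]) := by
  simpa using St.congr fn [t, s] 0 t t' h rfl

theorem st_congr2r (fn : S19) (s : Tm S19 Nat) {t t' : Tm S19 Nat} (h : St t t') :
    St (.app fn [s, t]) (.app fn [s, t']) := by
  simpa using St.congr fn [s, t] 1 t t' h rfl

theorem sts_congr1 (fn : S19) {t t' : Tm S19 Nat} (h : Sts t t') :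
    Sts (.app fn [t]) (.app fn [t']) :=
  Relation.ReflTransGen.lift (fun x => Tm.app fn [x]) (fun _ _ hab => st_congr1 fn hab) _ _ h

theorem sts_congr2l (fn : S19) (s : Tm S19 Nat) {t t' : Tm S19 Nat} (h : Sts t t') :
    Sts (.app fn [t, s]) (.app fn [t', s]) :=
  Relation.ReflTransGen.lift (fun x => Tm.app fn [x, s]) (fun _ _ hab => st_congr2l fn s hab) _ _ h

theorem sts_congr2r (fn : S19) (s : Tm S19 Nat) {t t' : Tm S19 Nat} (h : Sts t t') :
    Sts (.app fn [s, t]) (.app fn [s, t']) :=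
  Relation.ReflTransGen.lift (fun x => Tm.app fn [s, x]) (fun _ _ hab => st_congr2r fn s hab) _ _ h

theorem steps_nf : ∀ n t, sizeOf t ≤ n → Sts t (nf t) := by
  intro n
  induction n with
  | zero => intro t ht; cases t <;> simp_all
  | succ n ih =>
    intro t ht
    cases t with
    | var x => rw [nf]
    | app fn ts =>
      have hsz : ∀ u ∈ ts, sizeOf u ≤ n := by
        intro u hu
        have := List.sizeOf_lt_of_mem hu
        simp only [Tm.app.sizeOf_spec] at ht
        omega
      rcases ts with _ | ⟨t1, _ | ⟨t2, _ | ⟨t3, ts⟩⟩⟩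
      · cases fn <;> simp only [nf] <;> exact Relation.ReflTransGen.refl
      · have ih1 := ih t1 (hsz t1 (by simp))
        cases fn <;> simp only [nf]
        case e => exact (sts_congr1 _ ih1).tail (St.r3 _)
        case f =>
          refine ((sts_congr1 _ ih1).tail (St.r1 _)).tail ?_
          exact st_congr2l _ _ (St.r3 _)
        case g => exact sts_congr1 _ ih1
        all_goals exact Relation.ReflTransGen.refl
      · have ih1 := ih t1 (hsz t1 (by simp))
        have ih2 := ih t2 (hsz t2 (by simp))
        cases fn <;> simp only [nf]
        case h =>
          have base : Sts (Tm.app .h [t1, t2]) (Tm.app .h [nf t1, nf t2]) :=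
            (sts_congr2l _ _ ih1).trans (sts_congr2r _ _ ih2)
          split
          case isTrue hc =>
            rw [hc] at base
            refine ((base.tail (St.r2 _)).tail (st_congr1 _ (St.r1 _))).tail ?_
            exact st_congr1 _ (st_congr2l _ _ (St.r3 _))
          case isFalse => exact base
        case i =>
          have base : Sts (Tm.app .i [t1, t2]) (Tm.app .i [nf t1, nf t2]) :=
            (sts_congr2l _ _ ih1).trans (sts_congr2r _ _ ih2)
          split
          case isTrue hc => rw [hc] at base; exact base.tail (St.r4 _)
          case isFalse =>
            split
            case isTrue hc => rw [hc] at base; exact base.tail (St.r5 _)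
            case isFalse => exact base
        all_goals exact Relation.ReflTransGen.refl
      · cases fn <;> simp only [nf] <;> exact Relation.ReflTransGen.refl

end Work2
section Work3
open Tm S19

theorem ne_g (t : Tm S19 Nat) : t ≠ .app .g [t] := by
  intro h
  have := congrArg sizeOf h
  simp only [Tm.app.sizeOf_spec, List.cons.sizeOf_spec, List.nil.sizeOf_spec] at this
  omega

theorem st_nf {s t : Tm S19 Nat} (h : St s t) (hw : W s) : nf s = nf t := by
  induction h with
  | r1 u =>
    obtain ⟨x, rfl⟩ := sort0_var (by simp only [W] at hw; exact hw.2)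
    simp [nf]
  | r2 u =>
    obtain ⟨x, rfl⟩ := sort0_var (by simp only [W] at hw; exact hw.2.2.2)
    simp [nf]
  | r3 u => simp [nf]
  | r4 u => simp [nf]
  | r5 u =>
    simp only [nf]
    by_cases hc : nf u = app g [nf u]
    · exact absurd hc (ne_g _)
    simp [hc]
  | congr fn ts i u u' hst hg ih =>
    rcases ts with _ | ⟨t1, _ | ⟨t2, _ | ⟨t3, ts⟩⟩⟩
    · simp at hg
    · rcases i with _ | i
      · simp only [List.getElem?_cons_succ, List.getElem?_cons_zero] at hg
        injection hg with hg; subst hg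
        cases fn <;> simp only [W] at hw <;> try exact hw.elim
        · obtain ⟨x, rfl⟩ := sort0_var hw.2
          exact absurd hst st_not_var
        · simp only [List.set, nf]; rw [ih hw.1]
        · obtain ⟨x, rfl⟩ := sort0_var hw.2
          exact absurd hst st_not_var
      · simp at hg
    · rcases i with _ | ⟨_ | i⟩
      · simp only [List.getElem?_cons_succ, List.getElem?_cons_zero] at hg
        injection hg with hg; subst hg
        cases fn <;> simp only [W] at hw <;> try exact hw.elim
        · -- h
          obtain ⟨hw1, hw2, hs1, hs2⟩ := hw
          simp only [List.set, nf]; rw [ih hw1]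
        · -- i
          obtain ⟨hw1, hw2, hs1, hs2⟩ := hw
          simp only [List.set, nf]; rw [ih hw1]
      · simp only [List.getElem?_cons_succ, List.getElem?_cons_zero] at hg
        injection hg with hg; subst hg
        cases fn <;> simp only [W] at hw <;> try exact hw.elim
        · -- h
          obtain ⟨x, rfl⟩ := sort0_var hw.2.2.2
          exact absurd hst st_not_var
        · -- i
          obtain ⟨hw1, hw2, hs1, hs2⟩ := hw
          simp only [List.set, nf]; rw [ih hw2]
      · simp at hg
    · cases fn <;> simp only [W] at hw <;> exact hw.elim

theorem sts_W_nf {s t : Tm S19 Nat} (h : Sts s t) (hw : W s) : W t ∧ nf s = nf t := by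
  induction h with
  | refl => exact ⟨hw, rfl⟩
  | tail h1 h2 ih =>
    obtain ⟨hwb, hnf⟩ := ih
    exact ⟨(st_W h2 hwb).1, hnf.trans (st_nf h2 hwb)⟩

end Work3
section Final
open Tm S19

theorem steps_to_sts {s t : Tm S19 Nat} (h : Steps R19 s t) : Sts s t :=
  Relation.ReflTransGen.mono (fun _ _ h => step_to_st h) _ _ h

theorem sts_to_steps {s t : Tm S19 Nat} (h : Sts s t) : Steps R19 s t :=
  Relation.ReflTransGen.mono (fun _ _ h => st_to_step h) _ _ h

theorem no_step_a (u : Tm S19 Nat) : ¬ Step R19 (.app S19.a []) u := by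
  intro h
  cases step_to_st h with
  | congr fn ts i v v' h1 h2 => simp at h2

theorem no_step_b (u : Tm S19 Nat) : ¬ Step R19 (.app S19.b []) u := by
  intro h
  cases step_to_st h with
  | congr fn ts i v v' h1 h2 => simp at h2

theorem order_sorted_counterexample' :
    ConfluentOn R19 {t : Tm S19 Nat | ∃ α : Fin 4, OSort t α} ∧
    Steps R19 peakTm (Tm.app S19.a []) ∧
    Steps R19 peakTm (Tm.app S19.b []) ∧
    (∀ u, ¬ Step R19 (Tm.app S19.a []) u) ∧
    (∀ u, ¬ Step R19 (Tm.app S19.b []) u) ∧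
    (Tm.app S19.a [] : Tm S19 Nat) ≠ Tm.app S19.b [] ∧
    ¬ Confluent R19 := by
  set cc : Tm S19 Nat := .app .c [] with hcc
  have pa : Steps R19 peakTm (Tm.app S19.a []) :=
    Relation.ReflTransGen.single (st_to_step (St.r4 (.app .f [cc])))
  have pb : Steps R19 peakTm (Tm.app S19.b []) := by
    have s1 : St peakTm (.app .i [.app .f [cc], .app .h [.app .e [cc], cc]]) :=
      st_congr2r .i (.app .f [cc]) (St.r1 cc)
    have s2 : St (.app .i [.app .f [cc], .app .h [.app .e [cc], cc]])
        (.app .i [.app .f [cc], .app .h [cc, cc]]) :=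
      st_congr2r .i (.app .f [cc]) (st_congr2l .h cc (St.r3 cc))
    have s3 : St (.app .i [.app .f [cc], .app .h [cc, cc]])
        (.app .i [.app .f [cc], .app .g [.app .f [cc]]]) :=
      st_congr2r .i (.app .f [cc]) (St.r2 cc)
    have s4 : St (.app .i [.app .f [cc], .app .g [.app .f [cc]]]) (.app S19.b []) :=
      St.r5 (.app .f [cc])
    exact Relation.ReflTransGen.head (st_to_step s1) (Relation.ReflTransGen.head
      (st_to_step s2) (Relation.ReflTransGen.head (st_to_step s3)
      (Relation.ReflTransGen.single (st_to_step s4))))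
  have hconf : ConfluentOn R19 {t : Tm S19 Nat | ∃ α : Fin 4, OSort t α} := by
    rintro s ⟨α, hα⟩ t u h1 h2
    have hw : W s := (osort_W (sizeOf s) s le_rfl α hα).1
    obtain ⟨hwt, hnt⟩ := sts_W_nf (steps_to_sts h1) hw
    obtain ⟨hwu, hnu⟩ := sts_W_nf (steps_to_sts h2) hw
    refine ⟨nf s, ?_, ?_⟩
    · rw [hnt]; exact sts_to_steps (steps_nf (sizeOf t) t le_rfl)
    · rw [hnu]; exact sts_to_steps (steps_nf (sizeOf u) u le_rfl)
  have steps_a_eq : ∀ v, Steps R19 (Tm.app S19.a []) v → v = Tm.app S19.a [] := by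
    intro v h
    rcases h.cases_head with h | ⟨w, hw, _⟩
    · exact h.symm
    · exact absurd hw (no_step_a w)
  have steps_b_eq : ∀ v, Steps R19 (Tm.app S19.b []) v → v = Tm.app S19.b [] := by
    intro v h
    rcases h.cases_head with h | ⟨w, hw, _⟩
    · exact h.symm
    · exact absurd hw (no_step_b w)
  have hne : (Tm.app S19.a [] : Tm S19 Nat) ≠ Tm.app S19.b [] := by
    intro h; injection h with h1 h2; cases h1
  refine ⟨hconf, pa, pb, no_step_a, no_step_b, hne, ?_⟩
  intro hc
  obtain ⟨v, hav, hbv⟩ := hc peakTm (Set.mem_univ _) _ _ pa pb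
  exact hne ((steps_a_eq v hav).symm.trans (steps_b_eq v hbv))

end Final
/-- `R19` is confluent on order-sorted terms, but not confluent
on all terms: `a ←* i(f(c),f(c)) →* b` for the distinct normal forms `a`, `b`. -/
theorem order_sorted_counterexample :
    ConfluentOn R19 {t : Tm S19 Nat | ∃ α : Fin 4, OSort t α} ∧
    Steps R19 peakTm (Tm.app S19.a []) ∧
    Steps R19 peakTm (Tm.app S19.b []) ∧
    (∀ u, ¬ Step R19 (Tm.app S19.a []) u) ∧
    (∀ u, ¬ Step R19 (Tm.app S19.b []) u) ∧
    (Tm.app S19.a [] : Tm S19 Nat) ≠ Tm.app S19.b [] ∧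
    ¬ Confluent R19 := by
  exact order_sorted_counterexample'
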